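/- Let Λ be a left hereditary ring and (M_i)_{i∈I} a family of left Λ-modules. If each M_i is stable, then the direct sum ⊕_{i∈I} M_i is stable. -/

import Mathlib

universe u

/-- A module is *stable* if it has no nonzero projective direct summand. -/
def IsStableModule (Λ : Type u) [Ring Λ] (M : Type u) [AddCommGroup M] [Module Λ M] : Prop :=
  ∀ p : Submodule Λ M, Module.Projective Λ p → (∃ q, IsCompl p q) → p = ⊥

/-- If a stable module admits a nonzero map to the ring of a hereditary ring,
we get a contradiction: the image is a projective ideal, which splits off. -/
theorem IsStableModule.linearMap_to_ring_eq_zero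
    {Λ : Type u} [Ring Λ]
    (hHered : ∀ I : Ideal Λ, Module.Projective Λ I)
    {N : Type u} [AddCommGroup N] [Module Λ N]
    (hN : IsStableModule Λ N) (g : N →ₗ[Λ] Λ) : g = 0 := by
  by_contra hg
  set I : Ideal Λ := LinearMap.range g with hI
  haveI : Module.Projective Λ I := hHered I
  have hsurj : Function.Surjective g.rangeRestrict := g.surjective_rangeRestrict
  obtain ⟨h, hh⟩ := Module.projective_lifting_property g.rangeRestrict
    (LinearMap.id : I →ₗ[Λ] I) hsurj
  have hh' : ∀ y : I, g.rangeRestrict (h y) = y := fun y => by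
    have := congrArg (fun f => f y) hh
    exact this
  have hinj : Function.Injective h := by
    intro a b hab
    have := hh' a
    rw [hab, hh' b] at this
    exact this.symm
  set P' : Submodule Λ N := LinearMap.range h with hP'
  have hproj : Module.Projective Λ P' := by
    exact Module.Projective.of_equiv (LinearEquiv.ofInjective h hinj)
  -- the projection of N onto P'
  set f : N →ₗ[Λ] P' := h.rangeRestrict ∘ₗ g.rangeRestrict with hf
  have hfid : ∀ x : P', f (x : N) = x := by
    rintro ⟨x, y, rfl⟩
    apply Subtype.ext
    simp [hf, hh' y]
  have hcompl : IsCompl P' (LinearMap.ker f) := LinearMap.isCompl_of_proj hfid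
  have hbot : P' = ⊥ := hN P' hproj ⟨LinearMap.ker f, hcompl⟩
  -- hence h = 0, hence I = ⊥, hence g = 0, contradiction
  have hzero : ∀ y : I, (y : Λ) = 0 := by
    intro y
    have h0 : h y = 0 := by
      have : h y ∈ P' := LinearMap.mem_range_self h y
      rw [hbot] at this
      simpa using this
    have := hh' y
    rw [h0] at this
    have : (0 : I) = y := by simpa using this
    rw [← this]
    rfl
  have : I = ⊥ := by
    rw [eq_bot_iff]
    rintro x ⟨y, rfl⟩
    simpa using hzero ⟨g y, LinearMap.mem_range_self g y⟩
  apply hg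
  rw [← LinearMap.range_eq_bot, ← hI, this]

/-- Over a left hereditary ring, a direct sum of stable modules
is stable. -/
theorem isStable_directSum
    (Λ : Type u) [Ring Λ]
    (hHered : ∀ I : Ideal Λ, Module.Projective Λ I)
    (ι : Type u) [DecidableEq ι] (M : ι → Type u)
    [∀ i, AddCommGroup (M i)] [∀ i, Module Λ (M i)]
    (hM : ∀ i, IsStableModule Λ (M i)) :
    IsStableModule Λ (DirectSum ι M) := by
  intro p hp hq
  obtain ⟨q, hpq⟩ := hq
  -- projection onto p
  set ρ : DirectSum ι M →ₗ[Λ] p := p.linearProjOfIsCompl q hpq with hρ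
  -- section from projectivity of p
  obtain ⟨s, hs⟩ := Module.projective_def.mp hp
  -- the composite s ∘ ρ vanishes on each summand, hence is zero
  set τ : DirectSum ι M →ₗ[Λ] (p →₀ Λ) := s ∘ₗ ρ with hτ
  have hτ0 : τ = 0 := by
    apply DirectSum.linearMap_ext
    intro i
    apply LinearMap.ext
    intro m
    simp only [LinearMap.comp_apply, LinearMap.zero_apply]
    ext t
    have hg := (hM i).linearMap_to_ring_eq_zero hHered
      ((Finsupp.lapply t) ∘ₗ (τ ∘ₗ DirectSum.lof Λ ι M i))
    have := congrArg (fun f => f m) hg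
    simpa using this
  rw [eq_bot_iff]
  intro x hx
  have hsx : s ⟨x, hx⟩ = 0 := by
    have hρx : ρ x = ⟨x, hx⟩ := p.linearProjOfIsCompl_apply_left hpq ⟨x, hx⟩
    have : τ x = 0 := by rw [hτ0]; rfl
    rw [hτ, LinearMap.comp_apply, hρx] at this
    exact this
  have := hs ⟨x, hx⟩
  rw [hsx] at this
  simpa using (congrArg Subtype.val this).symm
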